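/- Suppose R0 > C/(C - V_H) and let x2 := 1 - C/(R0·(C - V_H)). Then G is differentiable at (x2, 1) and its Jacobian matrix there is the upper-triangular matrix with diagonal entries A := -C·(1 - 1/R0) + V_H and B := -(C·(2 + θ - R0) + R0·V_H)/(R0·(C - V_H)), upper-right entry x2·(x2 - 1)·(V_H - V_L), and lower-left entry 0. Moreover A < 0, and both diagonal entries (hence both eigenvalues) are negative if and only if R0 < (2 + θ)·C/(C - V_H). -/

import Mathlib

theorem stmt_5 (C V_H V_L θ R0 : ℝ)
    (hCH : C > V_H) (hHL : V_H > V_L) (hL : V_L > 0) (hθ : θ > 0) (hR0 : R0 > 1)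
    (V : ℝ → ℝ) (hV : ∀ n, V n = n * V_H + (1 - n) * V_L)
    (f : ℝ → ℝ)
    (hf1 : ∀ x : ℝ, x < 1 - 1 / R0 → f x = 1 - 1 / (R0 * (1 - x)))
    (hf2 : ∀ x : ℝ, x ≥ 1 - 1 / R0 → f x = 0)
    (G : ℝ × ℝ → ℝ × ℝ)
    (hG : ∀ p : ℝ × ℝ, G p = (p.1 * (1 - p.1) * (f p.1 * C - V p.2),
        p.2 * (1 - p.2) * (-p.1 + (1 + θ) * (1 - p.1))))
    (hR : R0 > C / (C - V_H))
    (x2 A B : ℝ) (hx2 : x2 = 1 - C / (R0 * (C - V_H)))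
    (hA : A = -C * (1 - 1 / R0) + V_H)
    (hB : B = -(C * (2 + θ - R0) + R0 * V_H) / (R0 * (C - V_H))) :
    DifferentiableAt ℝ G (x2, 1) ∧
    fderiv ℝ G (x2, 1) (1, 0) = (A, 0) ∧
    fderiv ℝ G (x2, 1) (0, 1) = (x2 * (x2 - 1) * (V_H - V_L), B) ∧
    A < 0 ∧
    (A < 0 ∧ B < 0 ↔ R0 < (2 + θ) * C / (C - V_H)) := by
  have hC : (0:ℝ) < C := lt_trans hL (lt_trans hHL hCH)
  have hCne : C ≠ 0 := ne_of_gt hC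
  have hCV : (0:ℝ) < C - V_H := sub_pos.mpr hCH
  have hCVne : C - V_H ≠ 0 := ne_of_gt hCV
  have hR0pos : (0:ℝ) < R0 := lt_trans one_pos hR0
  have hR0ne : R0 ≠ 0 := ne_of_gt hR0pos
  have h1x2 : 1 - x2 = C / (R0 * (C - V_H)) := by rw [hx2]; ring
  have h1x2pos : 0 < 1 - x2 := by rw [h1x2]; positivity
  have hRC : C < R0 * (C - V_H) := by
    rw [gt_iff_lt, div_lt_iff₀ hCV] at hR; linarith
  have hx2lt : x2 < 1 - 1 / R0 := by
    have h : 1 / R0 < C / (R0 * (C - V_H)) := by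
      rw [div_lt_div_iff₀ hR0pos (by positivity)]
      nlinarith
    rw [hx2]; linarith
  have hdenne : R0 * (1 - x2) ≠ 0 := ne_of_gt (mul_pos hR0pos h1x2pos)
  -- the smooth model function
  set Ghat : ℝ × ℝ → ℝ × ℝ := fun p =>
      (p.1 * (1 - p.1) * ((1 - 1 / (R0 * (1 - p.1))) * C - (p.2 * V_H + (1 - p.2) * V_L)),
       p.2 * (1 - p.2) * (-p.1 + (1 + θ) * (1 - p.1))) with hGhat
  have hmem : {p : ℝ × ℝ | p.1 < 1 - 1 / R0} ∈ nhds ((x2, (1:ℝ))) :=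
    (isOpen_lt continuous_fst continuous_const).mem_nhds hx2lt
  have hEq : G =ᶠ[nhds ((x2, (1:ℝ)))] Ghat := by
    filter_upwards [hmem] with p hp
    rw [hG p, hf1 p.1 hp, hV p.2, hGhat]
  -- differentiability of the model
  have hdG : DifferentiableAt ℝ Ghat (x2, 1) := by
    rw [hGhat]
    apply DifferentiableAt.prodMk
    · apply DifferentiableAt.mul
      · exact differentiableAt_fst.mul ((differentiableAt_const 1).sub differentiableAt_fst)
      · apply DifferentiableAt.sub
        · apply DifferentiableAt.mul _ (differentiableAt_const C)
          apply DifferentiableAt.sub (differentiableAt_const (1:ℝ))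
          simp only [one_div]
          exact ((differentiableAt_const R0).mul ((differentiableAt_const 1).sub
            differentiableAt_fst)).inv hdenne
        · exact (differentiableAt_snd.mul (differentiableAt_const V_H)).add
            (((differentiableAt_const 1).sub differentiableAt_snd).mul (differentiableAt_const V_L))
    · exact (differentiableAt_snd.mul ((differentiableAt_const 1).sub differentiableAt_snd)).mul
        (differentiableAt_fst.neg.add
          ((differentiableAt_const (1 + θ)).mul ((differentiableAt_const 1).sub differentiableAt_fst)))
  have hdiffG : DifferentiableAt ℝ G (x2, 1) := hdG.congr_of_eventuallyEq hEq
  have hfde : fderiv ℝ G (x2, 1) = fderiv ℝ Ghat (x2, 1) := hEq.fderiv_eq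
  -- direction (1, 0)
  have hline1 : HasDerivAt (fun x : ℝ => ((x, (1:ℝ)) : ℝ × ℝ)) ((1:ℝ), (0:ℝ)) x2 :=
    (hasDerivAt_id x2).prodMk (hasDerivAt_const x2 1)
  have hcomp1 : HasDerivAt (fun x : ℝ => Ghat (x, 1)) (fderiv ℝ Ghat (x2, 1) (1, 0)) x2 :=
    hdG.hasFDerivAt.comp_hasDerivAt x2 hline1
  have ha : HasDerivAt (fun x : ℝ => x * (1 - x)) (1 * (1 - x2) + x2 * (0 - 1)) x2 :=
    (hasDerivAt_id x2).mul ((hasDerivAt_const x2 1).sub (hasDerivAt_id x2))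
  have hdenD : HasDerivAt (fun x : ℝ => R0 * (1 - x)) (R0 * (0 - 1)) x2 :=
    HasDerivAt.const_mul R0 ((hasDerivAt_const x2 1).sub (hasDerivAt_id x2))
  have hdiv1 : HasDerivAt (fun x : ℝ => 1 / (R0 * (1 - x)))
      ((0 * (R0 * (1 - x2)) - 1 * (R0 * (0 - 1))) / (R0 * (1 - x2)) ^ 2) x2 :=
    (hasDerivAt_const x2 1).div hdenD hdenne
  have hb : HasDerivAt
      (fun x : ℝ => (1 - 1 / (R0 * (1 - x))) * C - (1 * V_H + (1 - 1) * V_L))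
      ((0 - (0 * (R0 * (1 - x2)) - 1 * (R0 * (0 - 1))) / (R0 * (1 - x2)) ^ 2) * C) x2 :=
    (((hasDerivAt_const x2 1).sub hdiv1).mul_const C).sub_const (1 * V_H + (1 - 1) * V_L)
  have hφ1 := ha.mul hb
  have hφ1' : HasDerivAt
      (fun x : ℝ => x * (1 - x) * ((1 - 1 / (R0 * (1 - x))) * C - (1 * V_H + (1 - 1) * V_L)))
      A x2 := by
    refine hφ1.congr_deriv ?_
    rw [hA, hx2]
    field_simp
    rw [show R0 * (C - V_H) - (R0 * (C - V_H) - C) = C by ring]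
    field_simp
    ring
  have hin : HasDerivAt (fun x : ℝ => -x + (1 + θ) * (1 - x)) (-1 + (1 + θ) * (0 - 1)) x2 :=
    (hasDerivAt_id x2).neg.add
      (HasDerivAt.const_mul (1 + θ) ((hasDerivAt_const x2 1).sub (hasDerivAt_id x2)))
  have hφ2 := HasDerivAt.const_mul ((1:ℝ) * (1 - 1)) hin
  have hφ2' : HasDerivAt (fun x : ℝ => (1:ℝ) * (1 - 1) * (-x + (1 + θ) * (1 - x))) (0:ℝ) x2 := by
    refine hφ2.congr_deriv ?_
    norm_num
  have hd1 : HasDerivAt (fun x : ℝ => Ghat (x, 1)) ((A, (0:ℝ)) : ℝ × ℝ) x2 := by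
    rw [hGhat]
    exact hφ1'.prodMk hφ2'
  have e1 : fderiv ℝ Ghat (x2, 1) (1, 0) = ((A, 0) : ℝ × ℝ) := hcomp1.unique hd1
  -- direction (0, 1)
  have hline2 : HasDerivAt (fun n : ℝ => ((x2, n) : ℝ × ℝ)) ((0:ℝ), (1:ℝ)) 1 :=
    (hasDerivAt_const 1 x2).prodMk (hasDerivAt_id 1)
  have hcomp2 : HasDerivAt (fun n : ℝ => Ghat (x2, n)) (fderiv ℝ Ghat (x2, 1) (0, 1)) 1 :=
    hdG.hasFDerivAt.comp_hasDerivAt 1 hline2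
  have hlin : HasDerivAt (fun n : ℝ => n * V_H + (1 - n) * V_L) (1 * V_H + (0 - 1) * V_L) 1 :=
    ((hasDerivAt_id 1).mul_const V_H).add
      (((hasDerivAt_const 1 1).sub (hasDerivAt_id 1)).mul_const V_L)
  have hψ1 := HasDerivAt.const_mul (x2 * (1 - x2))
    ((hasDerivAt_const (1:ℝ) ((1 - 1 / (R0 * (1 - x2))) * C)).sub hlin)
  have hψ1' : HasDerivAt
      (fun n : ℝ => x2 * (1 - x2) * ((1 - 1 / (R0 * (1 - x2))) * C - (n * V_H + (1 - n) * V_L)))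
      (x2 * (x2 - 1) * (V_H - V_L)) 1 := by
    refine hψ1.congr_deriv ?_
    ring
  have hψ2 := ((hasDerivAt_id (1:ℝ)).mul
      ((hasDerivAt_const (1:ℝ) (1:ℝ)).sub (hasDerivAt_id 1))).mul_const
      (-x2 + (1 + θ) * (1 - x2))
  have hψ2' : HasDerivAt (fun n : ℝ => n * (1 - n) * (-x2 + (1 + θ) * (1 - x2))) B 1 := by
    refine hψ2.congr_deriv ?_
    rw [hB, hx2]
    simp only [Pi.sub_apply, id]
    field_simp
    ring
  have hd2 : HasDerivAt (fun n : ℝ => Ghat (x2, n))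
      ((x2 * (x2 - 1) * (V_H - V_L), B) : ℝ × ℝ) 1 := by
    rw [hGhat]
    exact hψ1'.prodMk hψ2'
  have e2 : fderiv ℝ Ghat (x2, 1) (0, 1) = ((x2 * (x2 - 1) * (V_H - V_L), B) : ℝ × ℝ) :=
    hcomp2.unique hd2
  -- inequalities
  have hAneg : A < 0 := by
    have hCR : C / R0 < C - V_H := (div_lt_iff₀ hR0pos).mpr (by nlinarith)
    have hAe : A = C / R0 - (C - V_H) := by rw [hA]; field_simp; ring
    rw [hAe]; linarith
  have hDpos : 0 < R0 * (C - V_H) := mul_pos hR0pos hCV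
  have hiff : (A < 0 ∧ B < 0 ↔ R0 < (2 + θ) * C / (C - V_H)) := by
    constructor
    · rintro ⟨-, hBneg⟩
      rw [hB, div_neg_iff] at hBneg
      have hN : 0 < C * (2 + θ - R0) + R0 * V_H := by
        rcases hBneg with ⟨h1, h2⟩ | ⟨h1, h2⟩
        · linarith
        · linarith
      rw [lt_div_iff₀ hCV]
      nlinarith
    · intro h
      rw [lt_div_iff₀ hCV] at h
      refine ⟨hAneg, ?_⟩
      rw [hB]
      apply div_neg_of_neg_of_pos _ hDpos
      nlinarith
  refine ⟨hdiffG, ?_, ?_, hAneg, hiff⟩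
  · rw [hfde]; exact e1
  · rw [hfde]; exact e2
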